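/- For c > 1, the function φ(x) = (c^(1/x) - 1)^x is strictly decreasing on (0, ∞). -/

import Mathlib

open Real Set

theorem phi_strictAnti (c : ℝ) (hc : 1 < c) :
    StrictAntiOn (fun x : ℝ => (c ^ (1 / x) - 1) ^ x) (Set.Ioi 0) := by
  have hc0 : (0:ℝ) < c := lt_trans one_pos hc
  set g : ℝ → ℝ := fun t => Real.log (c ^ t - 1) / t with hgdef
  have hpow : ∀ t : ℝ, 0 < t → 1 < c ^ t := fun t ht =>
    (Real.one_lt_rpow_iff_of_pos hc0).2 (Or.inl ⟨hc, ht⟩)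
  have key : ∀ t : ℝ, 0 < t →
      HasDerivAt g ((c ^ t * Real.log c / (c ^ t - 1) * t - Real.log (c ^ t - 1)) / t ^ 2) t := by
    intro t ht
    have h1 : HasDerivAt (fun t : ℝ => c ^ t) (c ^ t * Real.log c) t :=
      (Real.hasStrictDerivAt_const_rpow hc0 t).hasDerivAt
    have h2 : HasDerivAt (fun t : ℝ => c ^ t - 1) (c ^ t * Real.log c) t := h1.sub_const 1
    have hne : c ^ t - 1 ≠ 0 := sub_ne_zero.2 (ne_of_gt (hpow t ht))
    have h3 : HasDerivAt (fun t : ℝ => Real.log (c ^ t - 1))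
        (c ^ t * Real.log c / (c ^ t - 1)) t := h2.log hne
    have h4 := h3.div (hasDerivAt_id t) (ne_of_gt ht)
    simp at h4; exact h4
  have hmono : StrictMonoOn g (Set.Ioi 0) := by
    apply strictMonoOn_of_deriv_pos (convex_Ioi 0)
    · intro t ht
      exact (key t ht).continuousAt.continuousWithinAt
    · intro t ht
      rw [interior_Ioi] at ht
      rw [(key t ht).deriv]
      have hu : 1 < c ^ t := hpow t ht
      have hu1 : (0:ℝ) < c ^ t - 1 := by linarith
      have hlogu : 0 < Real.log (c ^ t) := Real.log_pos hu
      have hlr : Real.log (c ^ t) = t * Real.log c := Real.log_rpow hc0 t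
      have ht0 : 0 < t := ht
      apply div_pos _ (by positivity)
      rw [sub_pos]
      have hrw : c ^ t * Real.log c / (c ^ t - 1) * t
          = c ^ t * Real.log (c ^ t) / (c ^ t - 1) := by
        rw [hlr]; field_simp
      rw [hrw, lt_div_iff₀ hu1]
      have hll : Real.log (c ^ t - 1) < Real.log (c ^ t) :=
        Real.log_lt_log hu1 (by linarith)
      rcases le_or_gt (Real.log (c ^ t - 1)) 0 with h | h
      · nlinarith
      · nlinarith
  intro x hx y hy hxy
  simp only [Set.mem_Ioi] at hx hy
  have hx' : (0:ℝ) < 1 / x := by positivity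
  have hy' : (0:ℝ) < 1 / y := by positivity
  have hlt : 1 / y < 1 / x := one_div_lt_one_div_of_lt hx hxy
  have := hmono hy' hx' hlt
  have hrwg : ∀ z : ℝ, 0 < z → (c ^ (1 / z) - 1) ^ z = Real.exp (g (1 / z)) := by
    intro z hz
    have hb : 0 < c ^ (1 / z) - 1 := by
      have := hpow (1 / z) (by positivity); linarith
    rw [Real.rpow_def_of_pos hb, hgdef]
    simp only
    rw [div_div_eq_mul_div, div_one, mul_comm]
  simp only
  rw [hrwg x hx, hrwg y hy]
  exact Real.exp_lt_exp.2 this
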